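/- If s is a counterexample to output-distribution equivalence of a hypothesis MDP H and the SUL MDP M such that M(s) = ⊥ (s is not observable on M), then there exists a prefix s' of s that is also a counterexample (H(s') ≠ M(s')) with M(s') ≠ ⊥. -/

import Mathlib

open scoped ENNReal Classical
open MeasureTheory

/-- Traces: alternating output-input sequences starting and ending with an output. -/
abbrev Trace (I O : Type*) := O × List (I × O)
/-- Test sequences: alternating output-input sequences starting with an output, ending with an input. -/
abbrev TS (I O : Type*) := List (O × I)
/-- Continuation sequences: start and end with an input. -/
abbrev CS (I O : Type*) := I × List (O × I)

/-- Deterministic labelled Markov decision process. -/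
structure DetMDP (Q I O : Type*) where
  q0 : Q
  trans : Q → I → Q → ℝ≥0∞
  lab : Q → O
  sum_one : ∀ q i, ∑' q', trans q i q' = 1
  det : ∀ q i q' q'', 0 < trans q i q' → 0 < trans q i q'' → lab q' = lab q'' → q' = q''

namespace DetMDP

variable {Q I O : Type*}

/-- Δ: unique successor with positive probability and matching label, if any. -/
noncomputable def step (M : DetMDP Q I O) (q : Q) (i : I) (o : O) : Option Q :=
  if h : ∃ q', 0 < M.trans q i q' ∧ M.lab q' = o then some h.choose else none

noncomputable def run (M : DetMDP Q I O) : Option Q → List (I × O) → Option Q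
  | oq, [] => oq
  | some q, (i, o) :: rest => M.run (M.step q i o) rest
  | none, _ :: _ => none

/-- δ*: the state reached by a trace, `none` if the trace is not observable. -/
noncomputable def dstar (M : DetMDP Q I O) (t : Trace I O) : Option Q :=
  if M.lab M.q0 = t.1 then M.run (some M.q0) t.2 else none

/-- Distribution over outputs after executing input `i` in state `q`. -/
noncomputable def outDist (M : DetMDP Q I O) (q : Q) (i : I) : O → ℝ≥0∞ :=
  fun o => ∑' q', if M.lab q' = o then M.trans q i q' else 0

end DetMDP

/-- Split a nonempty test sequence into its trace part and final input. -/
def tsSplit {I O : Type*} : O → I → TS I O → Trace I O × I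
  | o, i, [] => ((o, []), i)
  | o, i, (o', i') :: rest =>
    let p := tsSplit o' i' rest
    ((o, (i, p.1.1) :: p.1.2), p.2)

namespace DetMDP

variable {Q I O : Type*}

/-- The semantics of a deterministic labelled MDP: a partial map from test
sequences to output distributions. -/
noncomputable def sem (M : DetMDP Q I O) : TS I O → Option (O → ℝ≥0∞)
  | [] => some (fun o => if M.lab M.q0 = o then 1 else 0)
  | (o, i) :: rest =>
    let p := tsSplit o i rest
    match M.dstar p.1 with
    | none => none
    | some q => some (M.outDist q p.2)

/-- Probability of observing the output part of a trace suffix from a state. -/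
noncomputable def traceProb (M : DetMDP Q I O) : Option Q → List (I × O) → ℝ≥0∞
  | none, _ => 0
  | some _, [] => 1
  | some q, (i, o) :: rest => M.outDist q i o * M.traceProb (M.step q i o) rest

end DetMDP

def traceInputAux {I O : Type*} : O → List (I × O) → I → TS I O
  | o, [], i => [(o, i)]
  | o, (i', o') :: rest, i => (o, i') :: traceInputAux o' rest i

/-- The test sequence `t · i`. -/
def traceInput {I O : Type*} (t : Trace I O) (i : I) : TS I O := traceInputAux t.1 t.2 i

/-- The test sequence `t · e` for a continuation sequence `e`. -/
def traceCS {I O : Type*} (t : Trace I O) (e : CS I O) : TS I O := traceInput t e.1 ++ e.2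

/-- The trace `t · i · o`. -/
def extT {I O : Type*} (t : Trace I O) (i : I) (o : O) : Trace I O := (t.1, t.2 ++ [(i, o)])

/-- The last output of a trace. -/
def lastOut {I O : Type*} (t : Trace I O) : O := ((t.2.getLast?).map Prod.snd).getD t.1

/-- Trace prefix relation. -/
def tracePrefix {I O : Type*} (t t' : Trace I O) : Prop := t.1 = t'.1 ∧ t.2 <+: t'.2

/-- `f(s)(o)` read off a partial semantics function (0 when undefined). -/
def probOf {I O : Type*} (f : TS I O → Option (O → ℝ≥0∞)) (s : TS I O) (o : O) : ℝ≥0∞ :=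
  ((f s).getD fun _ => 0) o

/-- M-equivalence of traces. -/
def MEq {I O : Type*} (f : TS I O → Option (O → ℝ≥0∞)) (t1 t2 : Trace I O) : Prop :=
  lastOut t1 = lastOut t2 ∧ ∀ e : CS I O, f (traceCS t1 e) = f (traceCS t2 e)

/-- Row of a trace in an observation table with column labels `E`. -/
noncomputable def rowOn {I O : Type*} (E : Set (CS I O)) (f : TS I O → Option (O → ℝ≥0∞)) (t : Trace I O) :
    CS I O → Option (O → ℝ≥0∞) :=
  fun e => if e ∈ E then f (traceCS t e) else none

/-- Row equivalence `eqRow_E`. -/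
def eqRow {I O : Type*} (E : Set (CS I O)) (f : TS I O → Option (O → ℝ≥0∞))
    (t1 t2 : Trace I O) : Prop :=
  lastOut t1 = lastOut t2 ∧ rowOn E f t1 = rowOn E f t2

/-- Membership in `Lt(S)`: observable one-step extensions of short traces. -/
def inLt {I O : Type*} (f : TS I O → Option (O → ℝ≥0∞)) (S : Set (Trace I O))
    (t : Trace I O) : Prop :=
  ∃ s ∈ S, ∃ i o, t = extT s i o ∧ 0 < probOf f (traceInput s i) o

/-- Closedness of an observation table. -/
def ClosedTable {I O : Type*} (E : Set (CS I O)) (f : TS I O → Option (O → ℝ≥0∞))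
    (S : Set (Trace I O)) : Prop :=
  ∀ l, inLt f S l → ∃ s ∈ S, eqRow E f l s

/-- Consistency of an observation table. -/
def ConsistentTable {I O : Type*} (E : Set (CS I O)) (f : TS I O → Option (O → ℝ≥0∞))
    (S : Set (Trace I O)) : Prop :=
  ∀ s1 ∈ S, ∀ s2 ∈ S, eqRow E f s1 s2 → ∀ i o,
    (probOf f (traceInput s1 i) o = 0 ∧ probOf f (traceInput s2 i) o = 0) ∨
      eqRow E f (extT s1 i o) (extT s2 i o)

/-- The hypothesis state `⟨last(s), row(s)⟩` associated with a trace. -/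
noncomputable def stateOf {I O : Type*} (E : Set (CS I O)) (f : TS I O → Option (O → ℝ≥0∞))
    (t : Trace I O) : O × (CS I O → Option (O → ℝ≥0∞)) :=
  (lastOut t, rowOn E f t)


section Aux

variable {Q I O : Type*}

lemma run_append (M : DetMDP Q I O) (l : List (I × O)) :
    ∀ (oq : Option Q) (j : I) (o : O),
      M.run oq (l ++ [(j, o)]) = (M.run oq l).bind (fun q => M.step q j o) := by
  induction l with
  | nil => intro oq j o; cases oq <;> simp [DetMDP.run]
  | cons x l ih =>
    intro oq j o
    obtain ⟨i0, o0⟩ := x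
    cases oq with
    | none => simp [DetMDP.run]
    | some q => simpa [DetMDP.run] using ih (M.step q i0 o0) j o

lemma dstar_ext (M : DetMDP Q I O) (t : Trace I O) (j : I) (o : O) :
    M.dstar (extT t j o) = (M.dstar t).bind (fun q => M.step q j o) := by
  unfold DetMDP.dstar extT
  by_cases h : M.lab M.q0 = t.1 <;> simp [h, run_append]

lemma tsSplit_append :
    ∀ (rest : TS I O) (o : O) (i : I) (o' : O) (i' : I),
      tsSplit o i (rest ++ [(o', i')]) = (extT (tsSplit o i rest).1 (tsSplit o i rest).2 o', i') := by
  intro rest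
  induction rest with
  | nil => intros; simp [tsSplit, extT]
  | cons x rest ih =>
    intro o i o' i'
    obtain ⟨o2, i2⟩ := x
    simp [tsSplit, ih, extT]

lemma step_none_outDist {M : DetMDP Q I O} {q : Q} {j : I} {o : O}
    (h : M.step q j o = none) : M.outDist q j o = 0 := by
  have hne : ¬∃ q', 0 < M.trans q j q' ∧ M.lab q' = o := by
    intro hex
    simp [DetMDP.step, hex] at h
  push_neg at hne
  unfold DetMDP.outDist
  refine ENNReal.tsum_eq_zero.mpr fun q' => ?_
  by_cases hl : M.lab q' = o
  · simpa [hl] using nonpos_iff_eq_zero.mp (not_lt.mp (fun hp => (hne q' hp) hl))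
  · simp [hl]

lemma step_some_outDist {M : DetMDP Q I O} {q q' : Q} {j : I} {o : O}
    (h : M.step q j o = some q') : 0 < M.outDist q j o := by
  have hex : ∃ q'', 0 < M.trans q j q'' ∧ M.lab q'' = o := by
    by_contra hc
    simp [DetMDP.step, hc] at h
  obtain ⟨q'', hq, hl⟩ := hex
  calc (0 : ℝ≥0∞) < M.trans q j q'' := hq
    _ = if M.lab q'' = o then M.trans q j q'' else 0 := by simp [hl]
    _ ≤ M.outDist q j o := ENNReal.le_tsum q''

end Aux

/-- If `s` is a counterexample to output-distribution equivalence of a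
hypothesis `H` and the SUL `M` with `M(s) = ⊥`, then some prefix `s'` of `s` is a
counterexample with `M(s') ≠ ⊥`. -/
theorem observable_counterexample_prefix {Q1 Q2 I O : Type*}
    (H : DetMDP Q1 I O) (M : DetMDP Q2 I O) (s : TS I O)
    (hne : H.sem s ≠ M.sem s) (hbot : M.sem s = none) :
    ∃ s' : TS I O, s' <+: s ∧ H.sem s' ≠ M.sem s' ∧ M.sem s' ≠ none := by
  induction s using List.reverseRecOn with
  | nil => simp [DetMDP.sem] at hbot
  | append_singleton l x ih =>
    obtain ⟨o, i⟩ := x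
    cases l with
    | nil =>
      -- s = [(o,i)]
      have hHs : H.sem [(o, i)] ≠ none := fun h => hne (h.trans hbot.symm)
      have hM0 : M.lab M.q0 ≠ o := by
        intro h
        simp [DetMDP.sem, tsSplit, DetMDP.dstar, DetMDP.run, h] at hbot
      have hH0 : H.lab H.q0 = o := by
        by_contra h
        exact hHs (by simp [DetMDP.sem, tsSplit, DetMDP.dstar, h])
      refine ⟨[], List.nil_prefix, ?_, by simp [DetMDP.sem]⟩
      simp only [DetMDP.sem]
      intro h
      have := congrFun (Option.some.inj h) o
      simp [hH0, hM0] at this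
    | cons hd tl =>
      obtain ⟨o0, i0⟩ := hd
      set p := tsSplit o0 i0 tl with hp
      have hsplit : tsSplit o0 i0 (tl ++ [(o, i)]) = (extT p.1 p.2 o, i) :=
        tsSplit_append tl o0 i0 o i
      have hsemM : M.sem ((o0, i0) :: (tl ++ [(o, i)])) =
          (match M.dstar (extT p.1 p.2 o) with
            | none => none
            | some q => some (M.outDist q i)) := by
        simp [DetMDP.sem, hsplit]
      have hsemH : H.sem ((o0, i0) :: (tl ++ [(o, i)])) =
          (match H.dstar (extT p.1 p.2 o) with
            | none => none
            | some q => some (H.outDist q i)) := by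
        simp [DetMDP.sem, hsplit]
      have hHs : H.sem ((o0, i0) :: tl ++ [(o, i)]) ≠ none :=
        fun h => hne (h.trans hbot.symm)
      -- H side: dstar on extended trace defined
      have hHdext : H.dstar (extT p.1 p.2 o) ≠ none := by
        intro h
        rw [List.cons_append] at hHs
        rw [hsemH, h] at hHs
        exact hHs rfl
      obtain ⟨qH, hqH, q', hstepH⟩ : ∃ qH, H.dstar p.1 = some qH ∧ ∃ q', H.step qH p.2 o = some q' := by
        rw [dstar_ext] at hHdext
        cases hdH : H.dstar p.1 with
        | none => rw [hdH] at hHdext; exact absurd rfl hHdext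
        | some qH =>
          rw [hdH, Option.bind_some] at hHdext
          cases hst : H.step qH p.2 o with
          | none => exact absurd hst hHdext
          | some q' => exact ⟨qH, rfl, q', hst⟩
      have hHsem' : H.sem ((o0, i0) :: tl) = some (H.outDist qH p.2) := by
        simp [DetMDP.sem, ← hp, hqH]
      cases hdM : M.dstar p.1 with
      | none =>
        -- M undefined already on the shorter sequence: use IH
        have hMsem' : M.sem ((o0, i0) :: tl) = none := by
          simp [DetMDP.sem, ← hp, hdM]
        have hne' : H.sem ((o0, i0) :: tl) ≠ M.sem ((o0, i0) :: tl) := by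
          rw [hHsem', hMsem']; exact fun h => nomatch h
        obtain ⟨s', hpre, h1, h2⟩ := ih hne' hMsem'
        exact ⟨s', hpre.trans (List.prefix_append _ _), h1, h2⟩
      | some qM =>
        have hMsem' : M.sem ((o0, i0) :: tl) = some (M.outDist qM p.2) := by
          simp [DetMDP.sem, ← hp, hdM]
        have hstepM : M.step qM p.2 o = none := by
          cases hst : M.step qM p.2 o with
          | none => rfl
          | some q'' =>
            exfalso
            rw [List.cons_append, hsemM, dstar_ext, hdM] at hbot
            simp [hst] at hbot
        have hMo : M.outDist qM p.2 o = 0 := step_none_outDist hstepM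
        have hHo : 0 < H.outDist qH p.2 o := step_some_outDist hstepH
        refine ⟨(o0, i0) :: tl, List.prefix_append _ _, ?_, by rw [hMsem']; exact fun h => nomatch h⟩
        rw [hHsem', hMsem']
        intro h
        have := congrFun (Option.some.inj h) o
        rw [this, hMo] at hHo
        exact lt_irrefl _ hHo
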